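/- arXiv:2410.18602 — 3 statements merged into one kernel-verified Lean document; each statement's English description precedes it below -/
import Mathlib

section
/- PDA is individually rational: for every buyer i with true type θ_i, every report profile θ'_{-i} of the other buyers, and every order o ∈ O(V), if i reports truthfully then u_i^o(θ_i, (θ_i, θ'_{-i})) ≥ 0; in particular her expected utility over the uniformly random order is non-negative. -/
namespace DA

open scoped Classical

/-- A report profile for selling `k` homogeneous items: each agent reports a
valuation over quantities `0, …, k` and a set of neighbors. -/
structure Profile (V : Type*) (k : ℕ) where
  val : V → ℕ → ℝ
  nbr : V → Set V

/-- A valuation is valid if it is normalized (`v 0 = 0`) and has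
non-increasing marginals on `{0, …, k}`. -/
def ValidVal (k : ℕ) (v : ℕ → ℝ) : Prop :=
  v 0 = 0 ∧ ∀ q : ℕ, q + 2 ≤ k → v (q + 2) - v (q + 1) ≤ v (q + 1) - v q

variable {V : Type*}

/-- A profile is valid (w.r.t. seller `s`) if every buyer's valuation is valid. -/
def Profile.Valid {k : ℕ} (θ : Profile V k) (s : V) : Prop :=
  ∀ i : V, i ≠ s → ValidVal k (θ.val i)

/-- The reported (undirected) adjacency: `{i, j}` is an edge whenever
`j ∈ r'_i` (or symmetrically `i ∈ r'_j`). -/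
def Profile.adj {k : ℕ} (θ : Profile V k) (i j : V) : Prop :=
  j ∈ θ.nbr i ∨ i ∈ θ.nbr j

/-- The feasible set `F(θ', B)` of a coalition `B`: the buyers in `B` that are
connected to the seller `s` by a path of reported edges lying inside `B`
(empty if `s ∉ B`). -/
def Profile.feasible {k : ℕ} (θ : Profile V k) (s : V) (B : Set V) : Set V :=
  {i | i ≠ s ∧ i ∈ B ∧ s ∈ B ∧
    Relation.ReflTransGen (fun a b => θ.adj a b ∧ a ∈ B ∧ b ∈ B) s i}

/-- Updating agent `i`'s report in a profile. -/
def updateAgent [DecidableEq V] {k : ℕ} (θ : Profile V k) (i : V)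
    (v : ℕ → ℝ) (r : Set V) : Profile V k :=
  ⟨Function.update θ.val i v, Function.update θ.nbr i r⟩

/-- The profile `θ'_B` obtained by removing (setting to nil) the reports of
all agents outside the coalition `B`. -/
noncomputable def Profile.restrict {k : ℕ} (θ : Profile V k) (B : Set V) : Profile V k :=
  ⟨fun i q => if i ∈ B then θ.val i q else 0,
   fun i => if i ∈ B then θ.nbr i ∩ B else ∅⟩

section Homogeneous

variable [Fintype V] [DecidableEq V]

/-- Social welfare of an allocation `π` under reports `θ`. -/
def SW {k : ℕ} (θ : Profile V k) (s : V) (π : V → ℕ) : ℝ :=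
  ∑ i ∈ Finset.univ.erase s, θ.val i (π i)

/-- The allocations admissible for a coalition `B` with irrevocable prior
allocation `πhat`: at most `k` items in total are allocated (none to the
seller), only buyers in `F(θ, B)` receive items, and nobody receives fewer
items than in `πhat`. -/
def feasAllocs {k : ℕ} (θ : Profile V k) (s : V) (B : Set V) (πhat : V → ℕ) :
    Set (V → ℕ) :=
  {π | π s = 0 ∧ (∑ i ∈ Finset.univ.erase s, π i) ≤ k ∧
    (∀ i, i ∉ θ.feasible s B → π i = 0) ∧ ∀ j, j ≠ s → πhat j ≤ π j}

/-- `SW*(θ, B, πhat)`: the maximum social welfare over the admissible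
allocations for coalition `B` with prior allocation `πhat`. -/
noncomputable def SWstar {k : ℕ} (θ : Profile V k) (s : V) (B : Set V)
    (πhat : V → ℕ) : ℝ :=
  sSup (SW θ s '' feasAllocs θ s B πhat)

/-- A chosen allocation attaining `SW*(θ, B, πhat)`. -/
noncomputable def bestAlloc {k : ℕ} (θ : Profile V k) (s : V) (B : Set V)
    (πhat : V → ℕ) : V → ℕ :=
  Classical.epsilon fun π =>
    π ∈ feasAllocs θ s B πhat ∧ SW θ s π = SWstar θ s B πhat

/-- `o_{≺i}`: the set of agents strictly preceding `i` in the order `o`. -/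
def pred (o : V ≃ Fin (Fintype.card V)) (i : V) : Set V := {j | o j < o i}

/-- `o_{≼i} = o_{≺i} ∪ {i}`. -/
def predeq (o : V ≃ Fin (Fintype.card V)) (i : V) : Set V := {j | o j ≤ o i}

/-- The partial allocation produced by PDA after the first `t` agents of the
order `o` have been traversed: the seller is skipped, and each traversed buyer
`i` receives her share in a chosen allocation attaining
`SW*(θ, o_{≼i}, π^{o≺i})`, earlier allocations being irrevocable. -/
noncomputable def pdaStep {k : ℕ} (θ : Profile V k) (s : V)
    (o : V ≃ Fin (Fintype.card V)) : ℕ → V → ℕ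
  | 0 => fun _ => 0
  | t + 1 =>
    if h : t < Fintype.card V then
      let i := o.symm ⟨t, h⟩
      if i = s then pdaStep θ s o t
      else Function.update (pdaStep θ s o t) i
        (bestAlloc θ s (predeq o i) (pdaStep θ s o t) i)
    else pdaStep θ s o t

/-- `π^{o≺i}`: the allocation fixed by PDA right before agent `i` is traversed. -/
noncomputable def pdaPrior {k : ℕ} (θ : Profile V k) (s : V)
    (o : V ≃ Fin (Fintype.card V)) (i : V) : V → ℕ :=
  pdaStep θ s o (o i : ℕ)

/-- The final allocation `π^o` produced by PDA under the order `o`. -/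
noncomputable def pdaAlloc {k : ℕ} (θ : Profile V k) (s : V)
    (o : V ≃ Fin (Fintype.card V)) : V → ℕ :=
  pdaStep θ s o (Fintype.card V)

/-- The payment charged by PDA to agent `i` under the order `o`:
`p_i = SW*(θ, o_{≺i}, π^{o≺i}) − SW*(θ, o_{≼i}, π^{o≺i}) + v'_i(π_i)`, except
that agents traversed after all `k` items have been allocated pay `0`
(and the seller pays nothing). -/
noncomputable def pdaPay {k : ℕ} (θ : Profile V k) (s : V)
    (o : V ≃ Fin (Fintype.card V)) (i : V) : ℝ :=
  if i = s then 0
  else if (∑ j ∈ Finset.univ.erase s, pdaPrior θ s o i j) = k then 0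
  else SWstar θ s (pred o i) (pdaPrior θ s o i)
    - SWstar θ s (predeq o i) (pdaPrior θ s o i)
    + θ.val i (pdaAlloc θ s o i)

/-- `u_i^o`: the utility of buyer `i` with true valuation `v` under order `o`. -/
noncomputable def pdaUtil {k : ℕ} (v : ℕ → ℝ) (θ : Profile V k) (s : V)
    (o : V ≃ Fin (Fintype.card V)) (i : V) : ℝ :=
  v (pdaAlloc θ s o i) - pdaPay θ s o i

/-- `E_PDA(u_i)`: buyer `i`'s expected utility over the uniformly random order. -/
noncomputable def pdaExpUtil {k : ℕ} (v : ℕ → ℝ) (θ : Profile V k) (s : V)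
    (i : V) : ℝ :=
  (∑ o : V ≃ Fin (Fintype.card V), pdaUtil v θ s o i) /
    ((Fintype.card V).factorial : ℝ)

/-- `μ(θ)`: the fraction of orders for which PDA terminates with no item sold. -/
noncomputable def mu {k : ℕ} (θ : Profile V k) (s : V) : ℝ :=
  (Nat.card {o : V ≃ Fin (Fintype.card V) // ∀ j, pdaAlloc θ s o j = 0} : ℝ) /
    ((Fintype.card V).factorial : ℝ)

/-- The Shapley contribution `φ_i(θ)` of agent `i`. -/
noncomputable def shapley {k : ℕ} (θ : Profile V k) (s : V) (i : V) : ℝ :=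
  ∑ B ∈ (Finset.univ.erase i).powerset,
    ((B.card.factorial * (Fintype.card V - B.card - 1).factorial : ℝ) /
      ((Fintype.card V).factorial : ℝ)) *
    (SWstar θ s (↑(insert i B)) 0 - SWstar θ s (↑B) 0)

end Homogeneous

section IRLemmas

variable [Fintype V] [DecidableEq V] {k : ℕ}

lemma feasible_mono (θ : Profile V k) (s : V) {B B' : Set V} (h : B ⊆ B') :
    θ.feasible s B ⊆ θ.feasible s B' := by
  rintro i ⟨h1, h2, h3, h4⟩
  exact ⟨h1, h h2, h h3, Relation.ReflTransGen.mono (fun a b hab => ⟨hab.1, h hab.2.1, h hab.2.2⟩) _ _ h4⟩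

lemma feasAllocs_mono (θ : Profile V k) (s : V) {B B' : Set V} (h : B ⊆ B')
    (πh : V → ℕ) : feasAllocs θ s B πh ⊆ feasAllocs θ s B' πh := by
  rintro π ⟨h1, h2, h3, h4⟩
  exact ⟨h1, h2, fun j hj => h3 j fun hmem => hj (feasible_mono θ s h hmem), h4⟩

lemma feasAllocs_finite (θ : Profile V k) (s : V) (B : Set V) (πh : V → ℕ) :
    (feasAllocs θ s B πh).Finite := by
  apply Set.Finite.subset (Set.Finite.pi fun _ : V => Set.finite_Iic k)
  rintro π ⟨hs, hsum, -, -⟩ j -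
  by_cases hj : j = s
  · simpa [hj, hs] using Nat.zero_le k
  · exact le_trans
      (Finset.single_le_sum (f := π) (fun _ _ => Nat.zero_le _)
        (Finset.mem_erase.mpr ⟨hj, Finset.mem_univ j⟩)) hsum

lemma bestAlloc_spec (θ : Profile V k) (s : V) (B : Set V) (πh : V → ℕ)
    (hne : (feasAllocs θ s B πh).Nonempty) :
    bestAlloc θ s B πh ∈ feasAllocs θ s B πh ∧
      SW θ s (bestAlloc θ s B πh) = SWstar θ s B πh := by
  have himg : (SW θ s '' feasAllocs θ s B πh).Finite :=
    (feasAllocs_finite θ s B πh).image _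
  have hne' : (SW θ s '' feasAllocs θ s B πh).Nonempty := hne.image _
  obtain ⟨π, hπ, hπ2⟩ := hne'.csSup_mem himg
  exact Classical.epsilon_spec
    (p := fun π => π ∈ feasAllocs θ s B πh ∧ SW θ s π = SWstar θ s B πh)
    ⟨π, hπ, hπ2⟩

lemma SWstar_mono (θ : Profile V k) (s : V) {B B' : Set V} (h : B ⊆ B')
    (πh : V → ℕ) (hne : (feasAllocs θ s B πh).Nonempty) :
    SWstar θ s B πh ≤ SWstar θ s B' πh := by
  apply csSup_le_csSup ((feasAllocs_finite θ s B' πh).image _).bddAbove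
    (hne.image _)
  exact Set.image_mono (feasAllocs_mono θ s h πh)

variable (θ : Profile V k) (s : V) (o : V ≃ Fin (Fintype.card V))

lemma pdaStep_succ (t : ℕ) :
    pdaStep θ s o (t + 1) =
      if h : t < Fintype.card V then
        let i := o.symm ⟨t, h⟩
        if i = s then pdaStep θ s o t
        else Function.update (pdaStep θ s o t) i
          (bestAlloc θ s (predeq o i) (pdaStep θ s o t) i)
      else pdaStep θ s o t := rfl

lemma pdaStep_invariant (t : ℕ) :
    (pdaStep θ s o t) s = 0 ∧
    (∑ j ∈ Finset.univ.erase s, pdaStep θ s o t j) ≤ k ∧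
    ∀ j, pdaStep θ s o t j ≠ 0 →
      (o j : ℕ) < t ∧ j ∈ θ.feasible s (predeq o j) := by
  induction t with
  | zero => refine ⟨rfl, by simp [pdaStep], fun j hj => absurd rfl hj⟩
  | succ t ih =>
    obtain ⟨ihs, ihsum, ihsupp⟩ := ih
    rw [pdaStep_succ]
    by_cases h : t < Fintype.card V
    · simp only [h, dif_pos]
      set a := o.symm ⟨t, h⟩ with ha
      have hoa : (o a : ℕ) = t := by rw [ha, Equiv.apply_symm_apply]
      by_cases has : a = s
      · simp only [has, if_pos rfl]
        exact ⟨ihs, ihsum, fun j hj =>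
          ⟨Nat.lt_succ_of_lt (ihsupp j hj).1, (ihsupp j hj).2⟩⟩
      · simp only [if_neg has]
        -- the current partial allocation is itself admissible
        have hmem : pdaStep θ s o t ∈
            feasAllocs θ s (predeq o a) (pdaStep θ s o t) := by
          refine ⟨ihs, ihsum, fun j hj => ?_, fun j _ => le_rfl⟩
          by_contra hne
          obtain ⟨hlt, hfeas⟩ := ihsupp j hne
          apply hj
          refine feasible_mono θ s ?_ hfeas
          intro m hm
          simp only [predeq, Set.mem_setOf_eq] at hm ⊢
          rw [Fin.le_def] at hm ⊢
          omega
        have hspec := bestAlloc_spec θ s (predeq o a) (pdaStep θ s o t)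
          ⟨_, hmem⟩
        obtain ⟨⟨hβs, hβsum, hβsupp, hβge⟩, -⟩ := hspec
        set β := bestAlloc θ s (predeq o a) (pdaStep θ s o t) with hβ
        refine ⟨?_, ?_, ?_⟩
        · rw [Function.update_of_ne (Ne.symm has), ihs]
        · calc (∑ j ∈ Finset.univ.erase s,
              Function.update (pdaStep θ s o t) a (β a) j)
              ≤ ∑ j ∈ Finset.univ.erase s, β j := by
                apply Finset.sum_le_sum
                intro j hj
                by_cases hja : j = a
                · subst hja; rw [Function.update_self]
                · rw [Function.update_of_ne hja]
                  exact hβge j (Finset.mem_erase.mp hj).1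
            _ ≤ k := hβsum
        · intro j hj
          by_cases hja : j = a
          · subst hja
            rw [Function.update_self] at hj
            refine ⟨by omega, ?_⟩
            by_contra hfeas
            exact hj (hβsupp _ hfeas)
          · rw [Function.update_of_ne hja] at hj
            exact ⟨Nat.lt_succ_of_lt (ihsupp j hj).1, (ihsupp j hj).2⟩
    · simp only [h, dif_neg, not_false_iff]
      exact ⟨ihs, ihsum, fun j hj =>
        ⟨Nat.lt_succ_of_lt (ihsupp j hj).1, (ihsupp j hj).2⟩⟩

lemma pdaStep_stable {i : V} {t : ℕ} (hne : (o i : ℕ) ≠ t) :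
    pdaStep θ s o (t + 1) i = pdaStep θ s o t i := by
  rw [pdaStep_succ]
  by_cases h : t < Fintype.card V
  · simp only [h, dif_pos]
    by_cases has : o.symm ⟨t, h⟩ = s
    · simp [has]
    · simp only [if_neg has]
      rw [Function.update_of_ne]
      intro hia
      apply hne
      rw [hia, Equiv.apply_symm_apply]
  · simp [h]

lemma pdaStep_zero_of_le {i : V} {t : ℕ} (ht : t ≤ (o i : ℕ)) :
    pdaStep θ s o t i = 0 := by
  induction t with
  | zero => rfl
  | succ t ih =>
    rw [pdaStep_stable θ s o (by omega)]
    exact ih (by omega)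

lemma pdaPrior_self (i : V) : pdaPrior θ s o i i = 0 :=
  pdaStep_zero_of_le θ s o le_rfl

lemma pdaAlloc_eq_bestAlloc {i : V} (hi : i ≠ s) :
    pdaAlloc θ s o i =
      bestAlloc θ s (predeq o i) (pdaPrior θ s o i) i := by
  have hlt : (o i : ℕ) < Fintype.card V := (o i).isLt
  have hstep : pdaStep θ s o ((o i : ℕ) + 1) i =
      bestAlloc θ s (predeq o i) (pdaPrior θ s o i) i := by
    rw [pdaStep_succ]
    simp only [hlt, dif_pos]
    have hsymm : o.symm ⟨(o i : ℕ), hlt⟩ = i := by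
      simp [Fin.eta]
    rw [hsymm]
    simp only [if_neg hi]
    rw [Function.update_self]
    rfl
  have hconst : ∀ t, (o i : ℕ) + 1 ≤ t → t ≤ Fintype.card V →
      pdaStep θ s o t i = pdaStep θ s o ((o i : ℕ) + 1) i := by
    intro t
    induction t with
    | zero => omega
    | succ t ih =>
      intro h1 h2
      rcases Nat.eq_or_lt_of_le h1 with heq | hlt'
      · rw [heq]
      · rw [pdaStep_stable θ s o (by omega)]
        exact ih (by omega) (by omega)
  rw [pdaAlloc, hconst _ (by omega) le_rfl, hstep]

/-- The prior allocation is itself admissible for any coalition containing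
all the `predeq`-sets of agents preceding `i`. -/
lemma pdaPrior_mem_feasAllocs {i : V} (B : Set V)
    (hB : ∀ j, (o j : ℕ) < (o i : ℕ) → predeq o j ⊆ B) :
    pdaPrior θ s o i ∈ feasAllocs θ s B (pdaPrior θ s o i) := by
  obtain ⟨hs, hsum, hsupp⟩ := pdaStep_invariant θ s o ((o i : ℕ))
  refine ⟨hs, hsum, fun j hj => ?_, fun j _ => le_rfl⟩
  by_contra hne
  obtain ⟨hlt, hfeas⟩ := hsupp j hne
  exact hj (feasible_mono θ s (hB j hlt) hfeas)

end IRLemmas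

end DA


/-- PDA is individually rational: for every buyer i with true type
θ_i, every report profile of the other buyers, and every order o, if i reports
truthfully then u_i^o ≥ 0; in particular her expected utility over the
uniformly random order is non-negative. -/
theorem pda_IR {V : Type*} [Fintype V] [DecidableEq V]
    {k : ℕ} (hk : 1 ≤ k) (θ : DA.Profile V k) (s : V) (hθ : θ.Valid s)
    (i : V) (hi : i ≠ s) :
    (∀ o : V ≃ Fin (Fintype.card V), 0 ≤ DA.pdaUtil (θ.val i) θ s o i)
    ∧ 0 ≤ DA.pdaExpUtil (θ.val i) θ s i := by
  have hmain : ∀ o : V ≃ Fin (Fintype.card V), 0 ≤ DA.pdaUtil (θ.val i) θ s o i := by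
    intro o
    have hpriorself : DA.pdaPrior θ s o i i = 0 := DA.pdaPrior_self θ s o i
    have hpred_sub : ∀ j, (o j : ℕ) < (o i : ℕ) → DA.predeq o j ⊆ DA.pred o i := by
      intro j hj m hm
      simp only [DA.predeq, Set.mem_setOf_eq] at hm
      simp only [DA.pred, Set.mem_setOf_eq]
      rw [Fin.le_def] at hm
      rw [Fin.lt_def]
      omega
    have hpredeq_sub : ∀ j, (o j : ℕ) < (o i : ℕ) → DA.predeq o j ⊆ DA.predeq o i := by
      intro j hj m hm
      simp only [DA.predeq, Set.mem_setOf_eq] at hm ⊢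
      rw [Fin.le_def] at hm ⊢
      omega
    have hmem_pred : DA.pdaPrior θ s o i ∈
        DA.feasAllocs θ s (DA.pred o i) (DA.pdaPrior θ s o i) :=
      DA.pdaPrior_mem_feasAllocs θ s o _ hpred_sub
    have hmem_predeq : DA.pdaPrior θ s o i ∈
        DA.feasAllocs θ s (DA.predeq o i) (DA.pdaPrior θ s o i) :=
      DA.pdaPrior_mem_feasAllocs θ s o _ hpredeq_sub
    unfold DA.pdaUtil DA.pdaPay
    rw [if_neg hi]
    by_cases hsum : (∑ j ∈ Finset.univ.erase s, DA.pdaPrior θ s o i j) = k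
    · rw [if_pos hsum]
      -- all items already allocated: i gets nothing
      obtain ⟨⟨hβs, hβsum, hβsupp, hβge⟩, -⟩ :=
        DA.bestAlloc_spec θ s (DA.predeq o i) (DA.pdaPrior θ s o i) ⟨_, hmem_predeq⟩
      set β := DA.bestAlloc θ s (DA.predeq o i) (DA.pdaPrior θ s o i) with hβdef
      have halloc : DA.pdaAlloc θ s o i = β i := DA.pdaAlloc_eq_bestAlloc θ s o hi
      have hβi : β i = 0 := by
        by_contra hne
        have hlt : (∑ j ∈ Finset.univ.erase s, DA.pdaPrior θ s o i j) <
            ∑ j ∈ Finset.univ.erase s, β j := by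
          apply Finset.sum_lt_sum
          · intro j hj
            exact hβge j (Finset.mem_erase.mp hj).1
          · refine ⟨i, Finset.mem_erase.mpr ⟨hi, Finset.mem_univ i⟩, ?_⟩
            rw [hpriorself]
            omega
        omega
      rw [halloc, hβi, (hθ i hi).1]
      simp
    · rw [if_neg hsum]
      have hle : DA.SWstar θ s (DA.pred o i) (DA.pdaPrior θ s o i) ≤
          DA.SWstar θ s (DA.predeq o i) (DA.pdaPrior θ s o i) := by
        apply DA.SWstar_mono θ s _ _ ⟨_, hmem_pred⟩
        intro m hm
        simp only [DA.pred, Set.mem_setOf_eq] at hm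
        exact le_of_lt hm
      linarith
  refine ⟨hmain, ?_⟩
  unfold DA.pdaExpUtil
  apply div_nonneg
  · exact Finset.sum_nonneg fun o _ => hmain o
  · positivity
end

section
/- For any finite set V, any function f : Finset V → ℝ, and any element i ∈ V, the average marginal contribution of i over all orderings equals the weighted sum over coalitions: (1/|V|!) · Σ_{o ∈ permutations of V} (f(o_{≼i}) − f(o_{≺i})) = Σ_{B ⊆ V∖{i}} [|B|!·(|V|−|B|−1)!/|V|!] · (f(B ∪ {i}) − f(B)), where o_{≺i} is the set of elements strictly preceding i in the ordering o and o_{≼i} = o_{≺i} ∪ {i}. -/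
open Finset

set_option linter.unusedSectionVars false
set_option maxHeartbeats 1000000

section Aux
variable {V : Type*} [Fintype V] [DecidableEq V]

lemma oival {i : V} {B : Finset V} (o : V ≃ Fin (Fintype.card V))
    (ho : ∀ j, o j < o i ↔ j ∈ B) : (o i : ℕ) = B.card := by
  have himg : B.image o = Finset.Iio (o i) := by
    ext m
    simp only [Finset.mem_image, Finset.mem_Iio]
    constructor
    · rintro ⟨j, hj, rfl⟩; exact (ho j).mpr hj
    · intro hm; exact ⟨o.symm m, (ho _).mp (by simpa using hm), by simp⟩
  have := congrArg Finset.card himg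
  rw [Finset.card_image_of_injective _ o.injective, Fin.card_Iio] at this; omega

lemma fiber_card (i : V) (B : Finset V) (hB : B ⊆ Finset.univ.erase i) :
    (Finset.univ.filter fun o : V ≃ Fin (Fintype.card V) =>
        (Finset.univ.filter fun j => o j < o i) = B).card
      = B.card.factorial * (Fintype.card V - B.card - 1).factorial := by
  classical
  set n := Fintype.card V with hn
  set k := B.card with hkdef
  have hiB : i ∉ B := fun h => (Finset.mem_erase.mp (hB h)).1 rfl
  have hkn : k + 1 ≤ n := by
    have : (insert i B).card ≤ Finset.univ.card := Finset.card_le_univ _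
    rw [Finset.card_insert_of_notMem hiB, Finset.card_univ] at this
    omega
  set C : Finset V := Finset.univ \ insert i B with hC
  have hCcard : C.card = n - k - 1 := by
    rw [hC, Finset.card_sdiff_of_subset (Finset.subset_univ _),
      Finset.card_insert_of_notMem hiB, Finset.card_univ]
    omega
  have hmemC : ∀ j, j ∈ C ↔ (j ∉ B ∧ j ≠ i) := by
    intro j
    simp only [hC, Finset.mem_sdiff, Finset.mem_univ, Finset.mem_insert, true_and]
    tauto
  have hcond : ∀ o : V ≃ Fin n,
      ((Finset.univ.filter fun j => o j < o i) = B) ↔ (∀ j, o j < o i ↔ j ∈ B) := by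
    intro o
    constructor
    · intro h j; rw [← h]; simp
    · intro h; ext j; simp [h j]
  rw [← Fintype.card_subtype]
  have key : ∀ (o : V ≃ Fin n), (∀ j, o j < o i ↔ j ∈ B) →
      (∀ j, j ∈ B → (o j : ℕ) < k) ∧ (∀ j, j ∈ C → k + 1 ≤ (o j : ℕ)) := by
    intro o ho
    have hoi := oival o ho
    constructor
    · intro j hj
      have := (ho j).mpr hj
      rw [Fin.lt_def, hoi] at this; exact this
    · intro j hj
      rw [hmemC] at hj
      have h1 : ¬ (o j < o i) := fun h => hj.1 ((ho j).mp h)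
      have h2 : (o j : ℕ) ≠ (o i : ℕ) := fun h => hj.2 (o.injective (Fin.ext h))
      rw [Fin.lt_def, hoi] at h1
      omega
  -- extraction map
  let extract : {o : V ≃ Fin n // ∀ j, o j < o i ↔ j ∈ B} →
      ((↥B ≃ Fin k) × (↥C ≃ Fin (n - k - 1))) := fun oo =>
    ⟨Equiv.ofBijective
        (fun b => (⟨(oo.1 b : ℕ), (key oo.1 oo.2).1 b b.2⟩ : Fin k))
        ((Fintype.bijective_iff_injective_and_card _).mpr
          ⟨fun a b hab => by
            have hv := congrArg Fin.val hab
            simp only at hv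
            exact Subtype.ext (oo.1.injective (Fin.ext hv)),
           by simp [hkdef.symm]⟩),
     Equiv.ofBijective
        (fun c => (⟨(oo.1 c : ℕ) - (k + 1), by
            have h1 := (key oo.1 oo.2).2 c c.2
            have h2 : (oo.1 c : ℕ) < n := (oo.1 c).isLt
            omega⟩ : Fin (n - k - 1)))
        ((Fintype.bijective_iff_injective_and_card _).mpr
          ⟨fun a b hab => by
            have h1 := (key oo.1 oo.2).2 a a.2
            have h2 := (key oo.1 oo.2).2 b b.2
            have := congrArg Fin.val hab
            simp only at this
            exact Subtype.ext (oo.1.injective (Fin.ext (by omega))),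
           by simpa using hCcard⟩)⟩
  have hinj : Function.Injective extract := by
    intro oo oo' h
    have h1 := congrArg Prod.fst h
    have h2 := congrArg Prod.snd h
    apply Subtype.ext
    apply Equiv.ext
    intro j
    by_cases hj : j ∈ B
    · have := congrArg (fun e => ((e ⟨j, hj⟩ : Fin k) : ℕ)) h1
      have hv : (oo.1 j : ℕ) = (oo'.1 j : ℕ) := this
      exact Fin.ext hv
    · by_cases hji : j = i
      · subst hji
        apply Fin.ext
        rw [oival oo.1 oo.2, oival oo'.1 oo'.2]
      · have hjC : j ∈ C := (hmemC j).mpr ⟨hj, hji⟩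
        have := congrArg (fun e => ((e ⟨j, hjC⟩ : Fin (n - k - 1)) : ℕ)) h2
        have hv : (oo.1 j : ℕ) - (k + 1) = (oo'.1 j : ℕ) - (k + 1) := this
        have k1 := (key oo.1 oo.2).2 j hjC
        have k2 := (key oo'.1 oo'.2).2 j hjC
        exact Fin.ext (by omega)
  have hsurj : Function.Surjective extract := by
    rintro ⟨p, q⟩
    let g : V → Fin n := fun j =>
      if h : j ∈ B then ⟨(p ⟨j, h⟩ : ℕ), by have := (p ⟨j, h⟩).isLt; omega⟩
      else if h' : j = i then ⟨k, by omega⟩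
      else ⟨k + 1 + (q ⟨j, (hmemC j).mpr ⟨h, h'⟩⟩ : ℕ), by
        have := (q ⟨j, (hmemC j).mpr ⟨h, h'⟩⟩).isLt; omega⟩
    have hgB : ∀ j (h : j ∈ B), (g j : ℕ) = (p ⟨j, h⟩ : ℕ) := by
      intro j h; simp [g, h]
    have hgi : (g i : ℕ) = k := by simp [g, hiB]
    have hgC : ∀ j (h1 : j ∉ B) (h2 : j ≠ i),
        (g j : ℕ) = k + 1 + (q ⟨j, (hmemC j).mpr ⟨h1, h2⟩⟩ : ℕ) := by
      intro j h1 h2; simp [g, h1, h2]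
    have hginj : Function.Injective g := by
      intro a b hab
      have hval := congrArg Fin.val hab
      by_cases hai : a = i
      · by_cases hbi : b = i
        · rw [hai, hbi]
        · rw [hai, hgi] at hval
          by_cases hb : b ∈ B
          · rw [hgB b hb] at hval; have := (p ⟨b, hb⟩).isLt; omega
          · rw [hgC b hb hbi] at hval; omega
      · by_cases hbi : b = i
        · rw [hbi, hgi] at hval
          by_cases ha : a ∈ B
          · rw [hgB a ha] at hval; have := (p ⟨a, ha⟩).isLt; omega
          · rw [hgC a ha hai] at hval; omega
        · by_cases ha : a ∈ B <;> by_cases hb : b ∈ B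
          · rw [hgB a ha, hgB b hb] at hval
            exact congrArg Subtype.val (p.injective (Fin.ext hval))
          · rw [hgB a ha, hgC b hb hbi] at hval
            have := (p ⟨a, ha⟩).isLt; omega
          · rw [hgC a ha hai, hgB b hb] at hval
            have := (p ⟨b, hb⟩).isLt; omega
          · rw [hgC a ha hai, hgC b hb hbi] at hval
            have hq : ((q ⟨a, (hmemC a).mpr ⟨ha, hai⟩⟩ : Fin _) : ℕ)
                = ((q ⟨b, (hmemC b).mpr ⟨hb, hbi⟩⟩ : Fin _) : ℕ) := by omega
            exact congrArg Subtype.val (q.injective (Fin.ext hq))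
    have hgbij : Function.Bijective g :=
      (Fintype.bijective_iff_injective_and_card g).mpr ⟨hginj, by simp [hn]⟩
    let o : V ≃ Fin n := Equiv.ofBijective g hgbij
    have hoapp : ∀ j, o j = g j := fun j => rfl
    have hoB : ∀ j, o j < o i ↔ j ∈ B := by
      intro j
      rw [hoapp, hoapp, Fin.lt_def, hgi]
      constructor
      · intro hlt
        by_contra hj
        by_cases hji : j = i
        · subst hji; omega
        · rw [hgC j hj hji] at hlt; omega
      · intro hj
        rw [hgB j hj]
        have := (p ⟨j, hj⟩).isLt
        omega
    refine ⟨⟨o, hoB⟩, ?_⟩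
    apply Prod.ext
    · apply Equiv.ext
      rintro ⟨j, hj⟩
      apply Fin.ext
      show (o j : ℕ) = (p ⟨j, hj⟩ : ℕ)
      rw [hoapp, hgB j hj]
    · apply Equiv.ext
      rintro ⟨j, hj⟩
      apply Fin.ext
      show (o j : ℕ) - (k + 1) = (q ⟨j, hj⟩ : ℕ)
      obtain ⟨h1, h2⟩ := (hmemC j).mp hj
      rw [hoapp, hgC j h1 h2]
      omega
  have hcard : Fintype.card {o : V ≃ Fin n // (Finset.univ.filter fun j => o j < o i) = B}
      = Fintype.card (((↥B ≃ Fin k) × (↥C ≃ Fin (n - k - 1)))) := by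
    apply Fintype.card_congr
    exact (Equiv.subtypeEquivRight hcond).trans (Equiv.ofBijective extract ⟨hinj, hsurj⟩)
  rw [hcard, Fintype.card_prod,
    Fintype.card_equiv (Fintype.equivFinOfCardEq (by simp [hkdef.symm])),
    Fintype.card_equiv (Fintype.equivFinOfCardEq (by simpa using hCcard)),
    Fintype.card_coe, Fintype.card_coe, hCcard]

end Aux

/-- For any finite set V, any set function f : Finset V → ℝ, and
any element i ∈ V, the average marginal contribution of i over all orderings
equals the weighted sum over coalitions:
(1/|V|!) · Σ_{o} (f(o_{≼i}) − f(o_{≺i}))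
  = Σ_{B ⊆ V∖{i}} [|B|!·(|V|−|B|−1)!/|V|!] · (f(B ∪ {i}) − f(B)),
where o_{≺i} is the set of elements strictly preceding i in the ordering o and
o_{≼i} = o_{≺i} ∪ {i}. -/
theorem shapley_permutation_eq_coalition {V : Type*} [Fintype V] [DecidableEq V]
    (f : Finset V → ℝ) (i : V) :
    (1 / ((Fintype.card V).factorial : ℝ)) *
      ∑ o : V ≃ Fin (Fintype.card V),
        (f (Finset.univ.filter fun j => o j ≤ o i)
          - f (Finset.univ.filter fun j => o j < o i))
    = ∑ B ∈ (Finset.univ.erase i).powerset,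
        ((B.card.factorial * (Fintype.card V - B.card - 1).factorial : ℝ) /
          ((Fintype.card V).factorial : ℝ)) *
        (f (insert i B) - f B) := by
  classical
  have hins : ∀ o : V ≃ Fin (Fintype.card V),
      (Finset.univ.filter fun j => o j ≤ o i)
        = insert i (Finset.univ.filter fun j => o j < o i) := by
    intro o; ext j
    simp only [Finset.mem_filter, Finset.mem_univ, true_and, Finset.mem_insert]
    rw [le_iff_lt_or_eq]
    constructor
    · rintro (h | h)
      · exact Or.inr h
      · exact Or.inl (o.injective h)
    · rintro (rfl | h)
      · exact Or.inr rfl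
      · exact Or.inl h
  have hsum : ∑ o : V ≃ Fin (Fintype.card V),
      (f (Finset.univ.filter fun j => o j ≤ o i)
        - f (Finset.univ.filter fun j => o j < o i))
      = ∑ B ∈ (Finset.univ.erase i).powerset,
          ((B.card.factorial * (Fintype.card V - B.card - 1).factorial : ℕ) : ℝ) *
          (f (insert i B) - f B) := by
    rw [← Finset.sum_fiberwise_of_maps_to
      (g := fun o : V ≃ Fin (Fintype.card V) => Finset.univ.filter fun j => o j < o i)
      (t := (Finset.univ.erase i).powerset)
      (fun o _ => by
        simp only [Finset.mem_powerset]
        intro j hj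
        simp only [Finset.mem_filter, Finset.mem_univ, true_and] at hj
        exact Finset.mem_erase.mpr ⟨fun h => by subst h; exact lt_irrefl _ hj,
          Finset.mem_univ j⟩)]
    apply Finset.sum_congr rfl
    intro B hB
    have : ∀ o ∈ (Finset.univ.filter fun o : V ≃ Fin (Fintype.card V) =>
        (Finset.univ.filter fun j => o j < o i) = B),
        (f (Finset.univ.filter fun j => o j ≤ o i)
          - f (Finset.univ.filter fun j => o j < o i))
        = f (insert i B) - f B := by
      intro o ho
      have hPo := (Finset.mem_filter.mp ho).2
      rw [hins o, hPo]
    rw [Finset.sum_congr rfl this, Finset.sum_const,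
      fiber_card i B (Finset.mem_powerset.mp hB), nsmul_eq_mul]
  rw [hsum, Finset.mul_sum]
  apply Finset.sum_congr rfl
  intro B hB
  push_cast
  ring
end

section
/- For every report profile θ' in the k-item diffusion auction setting, the probability (over the uniformly random order) that PDA terminates with no items sold is at least 1/(k+1): μ(θ') ≥ 1/(k+1). -/
namespace PDAProof

open DA Finset
open scoped Classical Nat

variable {V : Type*} [Fintype V] [DecidableEq V] {k : ℕ}

/-- The chosen zero-prior optimal allocation for coalition `B`. -/
noncomputable def A (θ : Profile V k) (s : V) (B : Set V) : V → ℕ :=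
  bestAlloc θ s B (fun _ => 0)

lemma zero_mem_feas (θ : Profile V k) (s : V) (B : Set V) :
    (fun _ => 0 : V → ℕ) ∈ feasAllocs θ s B (fun _ => 0) := by
  refine ⟨rfl, by simp, fun _ _ => rfl, fun _ _ => le_rfl⟩

lemma feas_finite (θ : Profile V k) (s : V) (B : Set V) (πhat : V → ℕ) :
    (feasAllocs θ s B πhat).Finite := by
  have h : feasAllocs θ s B πhat ⊆ Set.pi Set.univ (fun _ : V => Set.Iic k) := by
    intro π hπ i _
    rcases eq_or_ne i s with rfl | hi
    · simp [hπ.1]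
    · have h1 : π i ≤ ∑ j ∈ Finset.univ.erase s, π j :=
        Finset.single_le_sum (fun j _ => Nat.zero_le _)
          (Finset.mem_erase.2 ⟨hi, Finset.mem_univ i⟩)
      exact Set.mem_Iic.2 (h1.trans hπ.2.1)
  exact (Set.Finite.pi fun _ => Set.finite_Iic k).subset h

lemma A_spec (θ : Profile V k) (s : V) (B : Set V) :
    A θ s B ∈ feasAllocs θ s B (fun _ => 0) := by
  have hne : (SW θ s '' feasAllocs θ s B (fun _ => 0)).Nonempty :=
    ⟨_, Set.mem_image_of_mem _ (zero_mem_feas θ s B)⟩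
  have hfin : (SW θ s '' feasAllocs θ s B (fun _ => 0)).Finite :=
    (feas_finite θ s B _).image _
  obtain ⟨π, hπ, hSW⟩ := hne.csSup_mem hfin
  have hex : ∃ π, π ∈ feasAllocs θ s B (fun _ => 0) ∧
      SW θ s π = SWstar θ s B (fun _ => 0) := ⟨π, hπ, hSW⟩
  exact (Classical.epsilon_spec hex).1

lemma A_s (θ : Profile V k) (s : V) (B : Set V) : A θ s B s = 0 := (A_spec θ s B).1

lemma A_feas {θ : Profile V k} {s : V} {B : Set V} {i : V} (h : A θ s B i ≠ 0) :
    i ∈ θ.feasible s B := by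
  by_contra hc
  exact h ((A_spec θ s B).2.2.1 i hc)

/-- The "selling set" of a coalition. -/
noncomputable def SF (θ : Profile V k) (s : V) (U : Finset V) : Finset V :=
  Finset.univ.filter fun x => A θ s (↑U) x ≠ 0

lemma s_not_mem_SF (θ : Profile V k) (s : V) (U : Finset V) : s ∉ SF θ s U := by
  simp [SF, A_s]

lemma SF_card_le (θ : Profile V k) (s : V) (U : Finset V) : (SF θ s U).card ≤ k := by
  have hsub : SF θ s U ⊆ Finset.univ.erase s := by
    intro x hx
    refine Finset.mem_erase.2 ⟨fun h => s_not_mem_SF θ s U (h ▸ hx), Finset.mem_univ x⟩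
  calc (SF θ s U).card = ∑ x ∈ SF θ s U, 1 := by simp
    _ ≤ ∑ x ∈ SF θ s U, A θ s (↑U) x := by
        refine Finset.sum_le_sum fun x hx => ?_
        have : A θ s (↑U) x ≠ 0 := (Finset.mem_filter.1 hx).2
        omega
    _ ≤ ∑ x ∈ Finset.univ.erase s, A θ s (↑U) x :=
        Finset.sum_le_sum_of_subset hsub
    _ ≤ k := (A_spec θ s (↑U)).2.1

lemma SF_empty (θ : Profile V k) {s : V} {U : Finset V} (hs : s ∉ U) : SF θ s U = ∅ := by
  refine Finset.eq_empty_of_forall_notMem fun x hx => ?_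
  have h := (Finset.mem_filter.1 hx).2
  exact hs ((A_feas h).2.2.1)

/-- The finset of good reversed orders of `U` (head = last agent). -/
noncomputable def goodPerms (θ : Profile V k) (s : V) (U : Finset V) : Finset (List V) :=
  if hU : U = ∅ then {([] : List V)}
  else (U \ SF θ s U).attach.biUnion fun x =>
    (goodPerms θ s (U.erase x.1)).image fun l => x.1 :: l
termination_by U.card
decreasing_by
  exact Finset.card_erase_lt_of_mem (Finset.mem_sdiff.1 x.2).1

lemma goodPerms_card_rec (θ : Profile V k) (s : V) {U : Finset V} (hU : U ≠ ∅) :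
    (goodPerms θ s U).card
      = ∑ x ∈ (U \ SF θ s U).attach, (goodPerms θ s (U.erase x.1)).card := by
  rw [goodPerms, dif_neg hU, Finset.card_biUnion]
  · exact Finset.sum_congr rfl fun x _ =>
      Finset.card_image_of_injective _ List.cons_injective
  · intro x _ y _ hxy
    rw [Function.onFun, Finset.disjoint_left]
    rintro l hl1 hl2
    obtain ⟨l1, _, rfl⟩ := Finset.mem_image.1 hl1
    obtain ⟨l2, _, he⟩ := Finset.mem_image.1 hl2
    exact hxy (Subtype.ext (List.head_eq_of_cons_eq he.symm ▸ rfl))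

lemma goodPerms_mem (θ : Profile V k) (s : V) :
    ∀ (l : List V) (U : Finset V), l ∈ goodPerms θ s U →
      l.Nodup ∧ l.toFinset = U ∧
        ∀ a x b, l = a ++ x :: b → A θ s (↑((x :: b).toFinset)) x = 0 := by
  intro l
  induction l with
  | nil =>
    intro U hl
    rw [goodPerms] at hl
    by_cases hU : U = ∅
    · subst hU
      refine ⟨List.nodup_nil, by simp, ?_⟩
      intro a x b hab
      exact absurd hab (by simp)
    · rw [dif_neg hU] at hl
      obtain ⟨x, _, hx⟩ := Finset.mem_biUnion.1 hl
      obtain ⟨l', _, he⟩ := Finset.mem_image.1 hx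
      exact absurd he (by simp)
  | cons x b ih =>
    intro U hl
    rw [goodPerms] at hl
    by_cases hU : U = ∅
    · rw [dif_pos hU] at hl
      exact absurd (Finset.mem_singleton.1 hl) (by simp)
    · rw [dif_neg hU] at hl
      obtain ⟨y, _, hy⟩ := Finset.mem_biUnion.1 hl
      obtain ⟨l', hl', he⟩ := Finset.mem_image.1 hy
      obtain ⟨hh, ht⟩ := List.cons.inj he
      have hxU : x ∈ U \ SF θ s U := by rw [← hh]; exact y.2
      have hxU' : x ∈ U := (Finset.mem_sdiff.1 hxU).1
      have hxS : x ∉ SF θ s U := (Finset.mem_sdiff.1 hxU).2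
      rw [hh, ht] at hl'
      obtain ⟨hnd, htf, hgood⟩ := ih (U.erase x) hl'
      have htf' : (x :: b).toFinset = U := by
        simp [List.toFinset_cons, htf, Finset.insert_erase hxU']
      refine ⟨?_, htf', ?_⟩
      · refine List.nodup_cons.2 ⟨?_, hnd⟩
        intro hxb
        have : x ∈ U.erase x := htf ▸ List.mem_toFinset.2 hxb
        simp at this
      · intro a z c hac
        cases a with
        | nil =>
          simp only [List.nil_append] at hac
          obtain ⟨hh2, ht2⟩ := List.cons.inj hac
          subst hh2; subst ht2

          rw [htf']
          by_contra h
          exact hxS (Finset.mem_filter.2 ⟨Finset.mem_univ x, h⟩)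
        | cons w a' =>
          have : b = a' ++ z :: c := List.tail_eq_of_cons_eq hac
          exact hgood a' z c this

lemma goodPerms_card_of_not_mem (θ : Profile V k) {s : V} :
    ∀ (U : Finset V), s ∉ U → (goodPerms θ s U).card = U.card ! := by
  intro U
  induction U using Finset.strongInductionOn with
  | _ U ih =>
    intro hs
    by_cases hU : U = ∅
    · subst hU
      rw [goodPerms]
      simp
    · rw [goodPerms_card_rec θ s hU, SF_empty θ hs, Finset.sdiff_empty]
      have hpos : 0 < U.card := Finset.card_pos.2 (Finset.nonempty_iff_ne_empty.2 hU)
      calc ∑ x ∈ U.attach, (goodPerms θ s (U.erase x.1)).card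
          = ∑ x ∈ U.attach, (U.card - 1)! := by
            refine Finset.sum_congr rfl fun x _ => ?_
            rw [ih _ (Finset.erase_ssubset x.2) (fun h => hs (Finset.mem_of_mem_erase h)),
              Finset.card_erase_of_mem x.2]
        _ = U.card * (U.card - 1)! := by
            rw [Finset.sum_const, Finset.card_attach, smul_eq_mul]
        _ = U.card ! := Nat.mul_factorial_pred hpos.ne'

lemma goodPerms_card_ge (θ : Profile V k) (s : V) :
    ∀ (U : Finset V), U.card ! ≤ (k + 1) * (goodPerms θ s U).card := by
  intro U
  induction U using Finset.strongInductionOn with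
  | _ U ih =>
    by_cases hs : s ∈ U
    · have hU : U ≠ ∅ := fun h => by simp [h] at hs
      have hpos : 0 < U.card := Finset.card_pos.2 (Finset.nonempty_iff_ne_empty.2 hU)
      set D := U \ SF θ s U with hD
      have hsD : s ∈ D := Finset.mem_sdiff.2 ⟨hs, s_not_mem_SF θ s U⟩
      have hrec : (goodPerms θ s U).card = ∑ x ∈ D, (goodPerms θ s (U.erase x)).card := by
        rw [goodPerms_card_rec θ s hU]
        exact Finset.sum_attach D (fun x => (goodPerms θ s (U.erase x)).card)
      have hcardD : U.card ≤ k + D.card := by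
        have h1 : U.card ≤ D.card + (SF θ s U).card := by
          rw [hD]; exact Finset.card_le_card_sdiff_add_card
        have h2 := SF_card_le θ s U
        omega
      have hsplit : ∑ x ∈ D, (goodPerms θ s (U.erase x)).card
          = (∑ x ∈ D.erase s, (goodPerms θ s (U.erase x)).card)
            + (goodPerms θ s (U.erase s)).card :=
        (Finset.sum_erase_add D _ hsD).symm
      have hse : (goodPerms θ s (U.erase s)).card = (U.card - 1)! := by
        rw [goodPerms_card_of_not_mem θ _ (Finset.notMem_erase s U),
          Finset.card_erase_of_mem hs]
      have hterm : ∀ x ∈ D.erase s, (U.card - 1)! ≤ (k+1) * (goodPerms θ s (U.erase x)).card := by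
        intro x hx
        have hxU : x ∈ U := (Finset.mem_sdiff.1 (Finset.mem_of_mem_erase hx)).1
        have := ih _ (Finset.erase_ssubset hxU)
        rwa [Finset.card_erase_of_mem hxU] at this
      have hDpos : 1 ≤ D.card := Finset.card_pos.2 ⟨s, hsD⟩
      calc U.card ! = U.card * (U.card - 1)! := (Nat.mul_factorial_pred hpos.ne').symm
        _ ≤ (k + D.card) * (U.card - 1)! := Nat.mul_le_mul_right _ hcardD
        _ = (D.card - 1) * (U.card - 1)! + (k+1) * (U.card - 1)! := by
            have : k + D.card = (D.card - 1) + (k + 1) := by omega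
            rw [this, Nat.add_mul]
        _ ≤ (∑ x ∈ D.erase s, (k+1) * (goodPerms θ s (U.erase x)).card)
            + (k+1) * (U.card - 1)! := by
            refine Nat.add_le_add_right ?_ _
            calc (D.card - 1) * (U.card - 1)!
                = ∑ _x ∈ D.erase s, (U.card - 1)! := by
                  rw [Finset.sum_const, Finset.card_erase_of_mem hsD, smul_eq_mul]
              _ ≤ _ := Finset.sum_le_sum hterm
        _ = (k+1) * (goodPerms θ s U).card := by
            rw [hrec, hsplit, ← hse, Nat.mul_add, Finset.mul_sum, Nat.add_comm]
    · rw [goodPerms_card_of_not_mem θ U hs]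
      exact Nat.le_mul_of_pos_left _ (Nat.succ_pos k)

/-- If every agent receives nothing in the chosen zero-prior optimal allocation
of its prefix coalition, PDA sells nothing. -/
lemma pda_zero_of_good (θ : Profile V k) (s : V) (o : V ≃ Fin (Fintype.card V))
    (hg : ∀ i : V, A θ s (predeq o i) i = 0) :
    ∀ j, pdaAlloc θ s o j = 0 := by
  have key : ∀ t, pdaStep θ s o t = fun _ => 0 := by
    intro t
    induction t with
    | zero => rfl
    | succ t ihs =>
      rw [pdaStep]
      by_cases h : t < Fintype.card V
      · rw [dif_pos h]
        by_cases hi : o.symm ⟨t, h⟩ = s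
        · rw [if_pos hi]; exact ihs
        · rw [if_neg hi, ihs]
          funext j
          rcases eq_or_ne j (o.symm ⟨t, h⟩) with rfl | hj
          · rw [Function.update_self]
            exact hg _
          · rw [Function.update_of_ne hj]
      · rw [dif_neg h]; exact ihs
  intro j
  rw [pdaAlloc, key]

/-- The permutation induced by a reversed order list. -/
noncomputable def listOrd (l : List V) : V ≃ Fin (Fintype.card V) :=
  if h : l.Nodup ∧ l.toFinset = (Finset.univ : Finset V) then
    have hnd : l.reverse.Nodup := List.nodup_reverse.2 h.1
    have hm : ∀ x : V, x ∈ l.reverse := fun x =>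
      List.mem_reverse.2 (List.mem_toFinset.1 (h.2 ▸ Finset.mem_univ x))
    have hlen : l.reverse.length = Fintype.card V := by
      rw [List.length_reverse, ← List.toFinset_card_of_nodup h.1, h.2, Finset.card_univ]
    ((hnd.getEquivOfForallMemList l.reverse hm).symm.trans (finCongr hlen))
  else (Fintype.equivFin V)

lemma listOrd_apply {l : List V} (h : l.Nodup ∧ l.toFinset = (Finset.univ : Finset V))
    (i : V) : ((listOrd l) i : ℕ) = l.reverse.idxOf i := by
  rw [listOrd, dif_pos h]
  rfl

lemma listOrd_good (θ : Profile V k) (s : V) {l : List V}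
    (hl : l ∈ goodPerms θ s Finset.univ) :
    ∀ j, pdaAlloc θ s (listOrd l) j = 0 := by
  obtain ⟨hnd, htf, hgood⟩ := goodPerms_mem θ s l Finset.univ hl
  have h : l.Nodup ∧ l.toFinset = (Finset.univ : Finset V) := ⟨hnd, htf⟩
  refine pda_zero_of_good θ s (listOrd l) ?_
  intro i
  have hi : i ∈ l := List.mem_toFinset.1 (htf ▸ Finset.mem_univ i)
  obtain ⟨a, b, rfl⟩ := List.append_of_mem hi
  have hib : i ∉ b := by
    have := (List.nodup_append.1 hnd).2.1
    exact (List.nodup_cons.1 this).1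
  have hidx : (a ++ i :: b).reverse.idxOf i = b.length := by
    rw [List.reverse_append, List.reverse_cons]
    rw [List.idxOf_append_of_mem (by simp)]
    rw [List.idxOf_append_of_notMem (by simpa using hib)]
    simp
  have hpredeq : predeq (listOrd (a ++ i :: b)) i = (↑((i :: b).toFinset) : Set V) := by
    ext j
    simp only [predeq, Set.mem_setOf_eq, Fin.le_def, listOrd_apply h,
      Finset.coe_insert, List.toFinset_cons, Set.mem_insert_iff, Finset.mem_coe,
      List.mem_toFinset, hidx]
    constructor
    · intro hj
      by_contra hc
      push_neg at hc
      obtain ⟨hji, hjb⟩ := hc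
      have hjidx : b.length + 1 ≤ (a ++ i :: b).reverse.idxOf j := by
        rw [List.reverse_append, List.reverse_cons,
          List.idxOf_append_of_notMem (by simp [hjb, hji])]
        simp only [List.length_append, List.length_reverse, List.length_cons,
          List.length_nil]
        omega
      omega
    · rintro (rfl | hjb)
      · omega
      · have : (a ++ i :: b).reverse.idxOf j < b.length := by
          rw [List.reverse_append, List.reverse_cons,
            List.idxOf_append_of_mem (by simp [hjb]),
            List.idxOf_append_of_mem (by simpa using hjb)]
          simpa using List.idxOf_lt_length_iff.2 (List.mem_reverse.2 hjb)
        omega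
  rw [hpredeq]
  exact hgood a i b rfl

lemma listOrd_injOn (θ : Profile V k) (s : V) :
    Set.InjOn listOrd (↑(goodPerms θ s Finset.univ) : Set (List V)) := by
  intro l1 hl1 l2 hl2 he
  obtain ⟨hnd1, htf1, _⟩ := goodPerms_mem θ s l1 Finset.univ hl1
  obtain ⟨hnd2, htf2, _⟩ := goodPerms_mem θ s l2 Finset.univ hl2
  have h1 : l1.Nodup ∧ l1.toFinset = (Finset.univ : Finset V) := ⟨hnd1, htf1⟩
  have h2 : l2.Nodup ∧ l2.toFinset = (Finset.univ : Finset V) := ⟨hnd2, htf2⟩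
  have hidx : ∀ i : V, l1.reverse.idxOf i = l2.reverse.idxOf i := by
    intro i
    rw [← listOrd_apply h1, ← listOrd_apply h2, he]
  have hlen1 : l1.reverse.length = Fintype.card V := by
    rw [List.length_reverse, ← List.toFinset_card_of_nodup hnd1, htf1, Finset.card_univ]
  have hlen2 : l2.reverse.length = Fintype.card V := by
    rw [List.length_reverse, ← List.toFinset_card_of_nodup hnd2, htf2, Finset.card_univ]
  have hrev : l1.reverse = l2.reverse := by
    apply List.ext_get (by rw [hlen1, hlen2])
    intro m hm1 hm2
    set x := l1.reverse.get ⟨m, hm1⟩ with hx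
    have hx1 : l1.reverse.idxOf x = m :=
      List.get_idxOf (List.nodup_reverse.2 hnd1) _
    have hx2 : l2.reverse.idxOf x = m := by rw [← hidx]; exact hx1
    have hlt : l2.reverse.idxOf x < l2.reverse.length := by rw [hx2]; exact hm2
    have h2get : l2.reverse.get ⟨l2.reverse.idxOf x, hlt⟩ = x := List.idxOf_get hlt
    have hfin : l2.reverse.get ⟨m, hm2⟩ = x := by
      rw [← h2get]
      congr 1
      exact Fin.ext hx2.symm
    rw [hfin]
  have : l1.reverse.reverse = l2.reverse.reverse := by rw [hrev]
  simpa using this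

lemma main_count (θ : Profile V k) (s : V) :
    (Fintype.card V)! ≤ (k + 1) *
      (Finset.univ.filter fun o : V ≃ Fin (Fintype.card V) =>
        ∀ j, pdaAlloc θ s o j = 0).card := by
  have h1 : (Fintype.card V)! ≤ (k + 1) * (goodPerms θ s Finset.univ).card := by
    have := goodPerms_card_ge θ s (Finset.univ : Finset V)
    rwa [Finset.card_univ] at this
  refine h1.trans (Nat.mul_le_mul_left _ ?_)
  refine Finset.card_le_card_of_injOn listOrd ?_ (listOrd_injOn θ s)
  intro l hl
  exact Finset.mem_filter.2 ⟨Finset.mem_univ _, listOrd_good θ s hl⟩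

end PDAProof


/-- For every report profile θ' in the k-item diffusion auction
setting, the probability (over the uniformly random order) that PDA terminates
with no items sold is at least 1/(k+1). -/
theorem pda_unsold_ratio {V : Type*} [Fintype V] [DecidableEq V]
    {k : ℕ} (hk : 1 ≤ k) (θ : DA.Profile V k) (s : V) (hθ : θ.Valid s) :
    (1 : ℝ) / (k + 1) ≤ DA.mu θ s := by
  classical
  have hcount := PDAProof.main_count θ s
  have hmu : DA.mu θ s = ((Finset.univ.filter fun o : V ≃ Fin (Fintype.card V) =>
      ∀ j, DA.pdaAlloc θ s o j = 0).card : ℝ) / ((Fintype.card V).factorial : ℝ) := by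
    rw [DA.mu]
    congr 1
    rw [Nat.card_eq_fintype_card, Fintype.card_subtype]
  rw [hmu]
  have hfac : (0 : ℝ) < ((Fintype.card V).factorial : ℝ) := by
    exact_mod_cast Nat.factorial_pos _
  have hk1 : (0 : ℝ) < (k : ℝ) + 1 := by positivity
  rw [div_le_div_iff₀ hk1 hfac]
  have := (Nat.cast_le (α := ℝ)).2 hcount
  push_cast at this
  linarith
end
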